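/- Let G be a complete graph on 14 vertices whose edges are red-blue colored with no monochromatic copy of the fan F_3, and let H be a set of 5 vertices inducing a blue complete graph K_5, with K = V(G) \ H. Then for any three distinct vertices v_1, v_2, v_3 of K, the sum of the numbers of blue neighbors in H of v_1, v_2, and v_3 is at most 7. -/

import Mathlib

/-- The fan `F n = K₁ + n·K₂`: vertex 0 is the center, and vertices
`2k+1, 2k+2` form the `k`-th edge of the matching, for `k < n`. -/
def fanGraph (n : ℕ) : SimpleGraph (Fin (2 * n + 1)) where
  Adj v w := v ≠ w ∧ (v = 0 ∨ w = 0 ∨ (v.val - 1) / 2 = (w.val - 1) / 2)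
  symm := by
    constructor
    intro v w h
    obtain ⟨h1, h2⟩ := h
    refine ⟨h1.symm, ?_⟩
    tauto
  loopless := by constructor; intro v h; exact h.1 rfl

/-- `ContainsCopy G H` : `G` contains a subgraph isomorphic to `H`
(an injective map of vertices sending edges of `H` to edges of `G`). -/
def ContainsCopy {α β : Type*} (G : SimpleGraph α) (H : SimpleGraph β) : Prop :=
  ∃ f : β ↪ α, ∀ ⦃a b : β⦄, H.Adj a b → G.Adj (f a) (f b)


set_option maxRecDepth 4000 in
set_option synthInstance.maxSize 4000 in
set_option synthInstance.maxHeartbeats 1000000 in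
lemma injkey : ∀ a b : Fin 7, a = b ∨ ((a = 0 ∧ b = 1) ∨ (a = 0 ∧ b = 2) ∨ (a = 0 ∧ b = 3) ∨ (a = 0 ∧ b = 4) ∨ (a = 0 ∧ b = 5) ∨ (a = 0 ∧ b = 6) ∨ (a = 1 ∧ b = 0) ∨ (a = 1 ∧ b = 2) ∨ (a = 1 ∧ b = 3) ∨ (a = 1 ∧ b = 4) ∨ (a = 1 ∧ b = 5) ∨ (a = 1 ∧ b = 6) ∨ (a = 2 ∧ b = 0) ∨ (a = 2 ∧ b = 1) ∨ (a = 2 ∧ b = 3) ∨ (a = 2 ∧ b = 4) ∨ (a = 2 ∧ b = 5) ∨ (a = 2 ∧ b = 6) ∨ (a = 3 ∧ b = 0) ∨ (a = 3 ∧ b = 1) ∨ (a = 3 ∧ b = 2) ∨ (a = 3 ∧ b = 4) ∨ (a = 3 ∧ b = 5) ∨ (a = 3 ∧ b = 6) ∨ (a = 4 ∧ b = 0) ∨ (a = 4 ∧ b = 1) ∨ (a = 4 ∧ b = 2) ∨ (a = 4 ∧ b = 3) ∨ (a = 4 ∧ b = 5) ∨ (a = 4 ∧ b = 6) ∨ (a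 = 5 ∧ b = 0) ∨ (a = 5 ∧ b = 1) ∨ (a = 5 ∧ b = 2) ∨ (a = 5 ∧ b = 3) ∨ (a = 5 ∧ b = 4) ∨ (a = 5 ∧ b = 6) ∨ (a = 6 ∧ b = 0) ∨ (a = 6 ∧ b = 1) ∨ (a = 6 ∧ b = 2) ∨ (a = 6 ∧ b = 3) ∨ (a = 6 ∧ b = 4) ∨ (a = 6 ∧ b = 5)) := by decide

set_option maxRecDepth 4000 in
set_option synthInstance.maxSize 4000 in
set_option synthInstance.maxHeartbeats 1000000 in
lemma adjkey : ∀ a b : Fin 7, a = b ∨ ¬(a = 0 ∨ b = 0 ∨ (a.val - 1) / 2 = (b.val - 1) / 2) ∨ ((a = 0 ∧ b = 1) ∨ (a = 0 ∧ b = 2) ∨ (a = 0 ∧ b = 3) ∨ (a = 0 ∧ b = 4) ∨ (a = 0 ∧ b = 5) ∨ (a = 0 ∧ b = 6) ∨ (a = 1 ∧ b = 2) ∨ (a = 3 ∧ b = 4) ∨ (a = 5 ∧ b = 6) ∨ (a = 1 ∧ b = 0) ∨ (a = 2 ∧ b = 0) ∨ (a = 3 ∧ b = 0) ∨ (a = 4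 ∧ b = 0) ∨ (a = 5 ∧ b = 0) ∨ (a = 6 ∧ b = 0) ∨ (a = 2 ∧ b = 1) ∨ (a = 4 ∧ b = 3) ∨ (a = 6 ∧ b = 5)) := by decide

lemma fan_of_pair (R : SimpleGraph (Fin 14)) (H : Finset (Fin 14)) (hH : H.card = 5)
    (hK5 : ∀ a ∈ H, ∀ b ∈ H, a ≠ b → Rᶜ.Adj a b)
    (u w : Fin 14) (hu : u ∉ H) (hw : w ∉ H) (huw : u ≠ w)
    (A B : Finset (Fin 14)) (hA : A ⊆ H) (hB : B ⊆ H)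
    (hAu : ∀ x ∈ A, Rᶜ.Adj u x) (hBw : ∀ x ∈ B, Rᶜ.Adj w x)
    (h2 : 2 ≤ A.card) (h3 : 3 ≤ B.card) (h6 : 6 ≤ A.card + B.card) :
    ContainsCopy Rᶜ (fanGraph 3) := by
  classical
  have hUnion : (A ∪ B).card ≤ 5 := by
    calc (A ∪ B).card ≤ H.card := Finset.card_le_card (Finset.union_subset hA hB)
    _ = 5 := hH
  have hInter : 1 ≤ (A ∩ B).card := by
    have := Finset.card_union_add_card_inter A B
    omega
  obtain ⟨h0, hh0⟩ := Finset.card_pos.mp (by omega : 0 < (A ∩ B).card)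
  have h0A : h0 ∈ A := Finset.mem_inter.mp hh0 |>.1
  have h0B : h0 ∈ B := Finset.mem_inter.mp hh0 |>.2
  have h0H : h0 ∈ H := hA h0A
  -- pick h1 ∈ A \ {h0}
  have : 1 ≤ (A.erase h0).card := by
    have := Finset.card_erase_of_mem h0A; omega
  obtain ⟨h1, hh1⟩ := Finset.card_pos.mp (by omega : 0 < (A.erase h0).card)
  have h1A : h1 ∈ A := Finset.mem_of_mem_erase hh1
  have h1ne0 : h1 ≠ h0 := Finset.ne_of_mem_erase hh1
  have h1H : h1 ∈ H := hA h1A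
  -- pick h2 ∈ B \ {h0, h1}
  have hc2 : 1 ≤ ((B.erase h0).erase h1).card := by
    have e1 := Finset.card_erase_of_mem h0B
    have e2 := Finset.card_le_card (Finset.erase_subset h1 (B.erase h0))
    have e3 : ((B.erase h0).erase h1).card ≥ (B.erase h0).card - 1 :=
      Finset.pred_card_le_card_erase
    omega
  obtain ⟨h2v, hh2⟩ := Finset.card_pos.mp (by omega : 0 < ((B.erase h0).erase h1).card)
  have h2ne1 : h2v ≠ h1 := Finset.ne_of_mem_erase hh2
  have h2ne0 : h2v ≠ h0 := Finset.ne_of_mem_erase (Finset.mem_of_mem_erase hh2)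
  have h2B : h2v ∈ B := Finset.mem_of_mem_erase (Finset.mem_of_mem_erase hh2)
  have h2H : h2v ∈ H := hB h2B
  -- pick h3, h4 ∈ H \ {h0,h1,h2}
  have hSc : (((H.erase h0).erase h1).erase h2v).card = 2 := by
    rw [Finset.card_erase_of_mem, Finset.card_erase_of_mem, Finset.card_erase_of_mem, hH]
    · exact h0H
    · exact Finset.mem_erase.mpr ⟨h1ne0, h1H⟩
    · exact Finset.mem_erase.mpr ⟨h2ne1, Finset.mem_erase.mpr ⟨h2ne0, h2H⟩⟩
  obtain ⟨h3v, hh3⟩ := Finset.card_pos.mp (by omega : 0 < (((H.erase h0).erase h1).erase h2v).card)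
  have h3ne2 : h3v ≠ h2v := Finset.ne_of_mem_erase hh3
  have h3ne1 : h3v ≠ h1 := Finset.ne_of_mem_erase (Finset.mem_of_mem_erase hh3)
  have h3ne0 : h3v ≠ h0 := Finset.ne_of_mem_erase (Finset.mem_of_mem_erase (Finset.mem_of_mem_erase hh3))
  have h3H : h3v ∈ H := Finset.mem_of_mem_erase (Finset.mem_of_mem_erase (Finset.mem_of_mem_erase hh3))
  have hS4 : 0 < ((((H.erase h0).erase h1).erase h2v).erase h3v).card := by
    rw [Finset.card_erase_of_mem hh3]; omega
  obtain ⟨h4v, hh4⟩ := Finset.card_pos.mp hS4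
  have h4ne3 : h4v ≠ h3v := Finset.ne_of_mem_erase hh4
  have h4ne2 : h4v ≠ h2v := Finset.ne_of_mem_erase (Finset.mem_of_mem_erase hh4)
  have h4ne1 : h4v ≠ h1 := Finset.ne_of_mem_erase (Finset.mem_of_mem_erase (Finset.mem_of_mem_erase hh4))
  have h4ne0 : h4v ≠ h0 := Finset.ne_of_mem_erase (Finset.mem_of_mem_erase (Finset.mem_of_mem_erase (Finset.mem_of_mem_erase hh4)))
  have h4H : h4v ∈ H := Finset.mem_of_mem_erase (Finset.mem_of_mem_erase (Finset.mem_of_mem_erase (Finset.mem_of_mem_erase hh4)))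
  -- blue adjacency facts
  have b01 : Rᶜ.Adj h0 u := (hAu h0 h0A).symm
  have b02 : Rᶜ.Adj h0 h1 := hK5 h0 h0H h1 h1H (Ne.symm h1ne0)
  have b03 : Rᶜ.Adj h0 w := (hBw h0 h0B).symm
  have b04 : Rᶜ.Adj h0 h2v := hK5 h0 h0H h2v h2H (Ne.symm h2ne0)
  have b05 : Rᶜ.Adj h0 h3v := hK5 h0 h0H h3v h3H (Ne.symm h3ne0)
  have b06 : Rᶜ.Adj h0 h4v := hK5 h0 h0H h4v h4H (Ne.symm h4ne0)
  have b12 : Rᶜ.Adj u h1 := hAu h1 h1A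
  have b34 : Rᶜ.Adj w h2v := hBw h2v h2B
  have b56 : Rᶜ.Adj h3v h4v := hK5 h3v h3H h4v h4H (Ne.symm h4ne3)
  -- distinctness of u,w from H members
  have nuh0 : u ≠ h0 := fun e => hu (e ▸ h0H)
  have nuh1 : u ≠ h1 := fun e => hu (e ▸ h1H)
  have nuh2 : u ≠ h2v := fun e => hu (e ▸ h2H)
  have nuh3 : u ≠ h3v := fun e => hu (e ▸ h3H)
  have nuh4 : u ≠ h4v := fun e => hu (e ▸ h4H)
  have nwh0 : w ≠ h0 := fun e => hw (e ▸ h0H)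
  have nwh1 : w ≠ h1 := fun e => hw (e ▸ h1H)
  have nwh2 : w ≠ h2v := fun e => hw (e ▸ h2H)
  have nwh3 : w ≠ h3v := fun e => hw (e ▸ h3H)
  have nwh4 : w ≠ h4v := fun e => hw (e ▸ h4H)
  let f : Fin 7 → Fin 14 := ![h0, u, h1, w, h2v, h3v, h4v]
  have finj : Function.Injective f := by
    intro a b hab
    by_contra hne
    rcases injkey a b with rfl|⟨rfl,rfl⟩|⟨rfl,rfl⟩|⟨rfl,rfl⟩|⟨rfl,rfl⟩|⟨rfl,rfl⟩|⟨rfl,rfl⟩|⟨rfl,rfl⟩|⟨rfl,rfl⟩|⟨rfl,rfl⟩|⟨rfl,rfl⟩|⟨rfl,rfl⟩|⟨rfl,rfl⟩|⟨rfl,rfl⟩|⟨rfl,rfl⟩|⟨rfl,rfl⟩|⟨rfl,rfl⟩|⟨rfl,rfl⟩|⟨rfl,rfl⟩|⟨rfl,rfl⟩|⟨rfl,rfl⟩|⟨rfl,rfl⟩|⟨rfl,rfl⟩|⟨rfl,rfl⟩|⟨rfl,rfl⟩|⟨rfl,rfl⟩|⟨rfl,rfl⟩|⟨rfl,rfl⟩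|⟨rfl,rfl⟩|⟨rfl,rfl⟩|⟨rfl,rfl⟩|⟨rfl,rfl⟩|⟨rfl,rfl⟩|⟨rfl,rfl⟩|⟨rfl,rfl⟩|⟨rfl,rfl⟩|⟨rfl,rfl⟩|⟨rfl,rfl⟩|⟨rfl,rfl⟩|⟨rfl,rfl⟩|⟨rfl,rfl⟩|⟨rfl,rfl⟩|⟨rfl,rfl⟩
    · exact hne rfl
    · exact ((Ne.symm nuh0)) hab
    · exact ((Ne.symm h1ne0)) hab
    · exact ((Ne.symm nwh0)) hab
    · exact ((Ne.symm h2ne0)) hab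
    · exact ((Ne.symm h3ne0)) hab
    · exact ((Ne.symm h4ne0)) hab
    · exact (nuh0) hab
    · exact (nuh1) hab
    · exact (huw) hab
    · exact (nuh2) hab
    · exact (nuh3) hab
    · exact (nuh4) hab
    · exact (h1ne0) hab
    · exact ((Ne.symm nuh1)) hab
    · exact ((Ne.symm nwh1)) hab
    · exact ((Ne.symm h2ne1)) hab
    · exact ((Ne.symm h3ne1)) hab
    · exact ((Ne.symm h4ne1)) hab
    · exact (nwh0) hab
    · exact ((Ne.symm huw)) hab
    · exact (nwh1) hab
    · exact (nwh2) hab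
    · exact (nwh3) hab
    · exact (nwh4) hab
    · exact (h2ne0) hab
    · exact ((Ne.symm nuh2)) hab
    · exact (h2ne1) hab
    · exact ((Ne.symm nwh2)) hab
    · exact ((Ne.symm h3ne2)) hab
    · exact ((Ne.symm h4ne2)) hab
    · exact (h3ne0) hab
    · exact ((Ne.symm nuh3)) hab
    · exact (h3ne1) hab
    · exact ((Ne.symm nwh3)) hab
    · exact (h3ne2) hab
    · exact ((Ne.symm h4ne3)) hab
    · exact (h4ne0) hab
    · exact ((Ne.symm nuh4)) hab
    · exact (h4ne1) hab
    · exact ((Ne.symm nwh4)) hab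
    · exact (h4ne2) hab
    · exact (h4ne3) hab
  refine ⟨⟨f, finj⟩, ?_⟩
  intro a b hab
  have hab' : a ≠ b ∧ (a = 0 ∨ b = 0 ∨ (a.val - 1) / 2 = (b.val - 1) / 2) := hab
  rcases adjkey a b with rfl|h|⟨rfl,rfl⟩|⟨rfl,rfl⟩|⟨rfl,rfl⟩|⟨rfl,rfl⟩|⟨rfl,rfl⟩|⟨rfl,rfl⟩|⟨rfl,rfl⟩|⟨rfl,rfl⟩|⟨rfl,rfl⟩|⟨rfl,rfl⟩|⟨rfl,rfl⟩|⟨rfl,rfl⟩|⟨rfl,rfl⟩|⟨rfl,rfl⟩|⟨rfl,rfl⟩|⟨rfl,rfl⟩|⟨rfl,rfl⟩|⟨rfl,rfl⟩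
  · exact absurd rfl hab'.1
  · exact absurd hab'.2 h
  · exact b01
  · exact b02
  · exact b03
  · exact b04
  · exact b05
  · exact b06
  · exact b12
  · exact b34
  · exact b56
  · exact b01.symm
  · exact b02.symm
  · exact b03.symm
  · exact b04.symm
  · exact b05.symm
  · exact b06.symm
  · exact b12.symm
  · exact b34.symm
  · exact b56.symm

/-- In a red-blue coloring of `K₁₄` with no monochromatic `F₃` and a blue `K₅` on
a 5-set `H`: for any three distinct vertices outside `H`, the sum of their
numbers of blue neighbors in `H` is at most 7. -/
theorem blue_nbhd_sum_le_seven (R : SimpleGraph (Fin 14))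
    (hred : ¬ ContainsCopy R (fanGraph 3)) (hblue : ¬ ContainsCopy Rᶜ (fanGraph 3))
    (H : Finset (Fin 14)) (hH : H.card = 5)
    (hK5 : ∀ a ∈ H, ∀ b ∈ H, a ≠ b → Rᶜ.Adj a b)
    (v₁ v₂ v₃ : Fin 14) (hv₁ : v₁ ∉ H) (hv₂ : v₂ ∉ H) (hv₃ : v₃ ∉ H)
    (h12 : v₁ ≠ v₂) (h13 : v₁ ≠ v₃) (h23 : v₂ ≠ v₃) :
    {h : Fin 14 | h ∈ H ∧ Rᶜ.Adj v₁ h}.ncard + {h : Fin 14 | h ∈ H ∧ Rᶜ.Adj v₂ h}.ncard +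
      {h : Fin 14 | h ∈ H ∧ Rᶜ.Adj v₃ h}.ncard ≤ 7 := by
  classical
  have hconv : ∀ v : Fin 14, {h : Fin 14 | h ∈ H ∧ Rᶜ.Adj v h}.ncard
      = (H.filter fun x => Rᶜ.Adj v x).card := by
    intro v
    rw [← Set.ncard_coe_finset]
    congr 1
    ext x
    simp
  rw [hconv, hconv, hconv]
  have hle : ∀ v : Fin 14, (H.filter fun x => Rᶜ.Adj v x).card ≤ 5 := by
    intro v
    calc (H.filter fun x => Rᶜ.Adj v x).card ≤ H.card := Finset.card_filter_le _ _
      _ = 5 := hH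
  have key : ∀ u w : Fin 14, u ∉ H → w ∉ H → u ≠ w →
      ¬(2 ≤ (H.filter fun x => Rᶜ.Adj u x).card ∧ 3 ≤ (H.filter fun x => Rᶜ.Adj w x).card ∧
        6 ≤ (H.filter fun x => Rᶜ.Adj u x).card + (H.filter fun x => Rᶜ.Adj w x).card) := by
    rintro u w hu hw huw ⟨c2, c3, c6⟩
    exact hblue (fan_of_pair R H hH hK5 u w hu hw huw _ _
      (Finset.filter_subset _ _) (Finset.filter_subset _ _)
      (fun x hx => (Finset.mem_filter.mp hx).2) (fun x hx => (Finset.mem_filter.mp hx).2)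
      c2 c3 c6)
  have k12 := key v₁ v₂ hv₁ hv₂ h12
  have k21 := key v₂ v₁ hv₂ hv₁ h12.symm
  have k13 := key v₁ v₃ hv₁ hv₃ h13
  have k31 := key v₃ v₁ hv₃ hv₁ h13.symm
  have k23 := key v₂ v₃ hv₂ hv₃ h23
  have k32 := key v₃ v₂ hv₃ hv₂ h23.symm
  have l1 := hle v₁
  have l2 := hle v₂
  have l3 := hle v₃
  omega
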